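/- Let $\mathcal{C}$ be an abelian category with enough injectives and $X$ an exact, locally nilpotent endofunctor preserving injectives. Then every injective object of the exact category $\operatorname{Mono}(X)$ is isomorphic to $f_!(J)$ for some injective $J \in \mathcal{C}$, and conversely every such $f_!(J)$ is injective in $\operatorname{Mono}(X)$. Moreover $\operatorname{Mono}(X)$ has enough injectives: every object admits an inflation into some $f_!(I)$ with $I$ injective in $\mathcal{C}$. -/

import Mathlib

open CategoryTheory Limits

universe v u

variable {C : Type u} [Category.{v} C]

/-- The power `X^n` of an endofunctor, with `X^(n+1) = X^n ⋙ X`. -/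
def fpow (X : C ⥤ C) : ℕ → (C ⥤ C)
  | 0 => 𝟭 C
  | n + 1 => fpow X n ⋙ X

/-- `X` is locally nilpotent if every object is annihilated by some power of `X`. -/
def LocallyNilpotent (X : C ⥤ C) : Prop :=
  ∀ M : C, ∃ n : ℕ, IsZero ((fpow X n).obj M)

/-- The category `(X ⇓ Id)` of `X`-modules, identified with the Eilenberg–Moore category
of the free monad on `X`. -/
structure XMod (X : C ⥤ C) : Type max u v where
  carrier : C
  str : X.obj carrier ⟶ carrier

/-- Morphisms of `X`-modules. -/
@[ext]
structure XModHom {X : C ⥤ C} (M N : XMod X) : Type v where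
  hom : M.carrier ⟶ N.carrier
  comm : M.str ≫ hom = X.map hom ≫ N.str

instance (X : C ⥤ C) : Category (XMod X) where
  Hom := XModHom
  id M := ⟨𝟙 M.carrier, by simp⟩
  comp f g := ⟨f.hom ≫ g.hom, by
    rw [← Category.assoc, f.comm, Category.assoc, g.comm, ← Category.assoc, ← Functor.map_comp]⟩
  id_comp f := by apply XModHom.ext; simp [CategoryStruct.id, CategoryStruct.comp]
  comp_id f := by apply XModHom.ext; simp [CategoryStruct.id, CategoryStruct.comp]
  assoc f g h := by apply XModHom.ext; simp [CategoryStruct.comp]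

@[simp] lemma XMod.id_hom {X : C ⥤ C} (M : XMod X) : (𝟙 M : XModHom M M).hom = 𝟙 M.carrier := rfl
@[simp] lemma XMod.comp_hom {X : C ⥤ C} {M N P : XMod X} (f : M ⟶ N) (g : N ⟶ P) :
    (f ≫ g).hom = f.hom ≫ g.hom := rfl

/-- `F` is the free `X`-module `f₁(N)` on `N`, encoded via the universal
property of the free–forgetful adjunction `f₁ ⊣ f⋆`. -/
structure IsFreeXModOn (X : C ⥤ C) (F : XMod X) (N : C) where
  unit : N ⟶ F.carrier
  lift : ∀ (P : XMod X), (N ⟶ P.carrier) → (F ⟶ P)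
  fac : ∀ (P : XMod X) (g : N ⟶ P.carrier), unit ≫ (lift P g).hom = g
  uniq : ∀ (P : XMod X) (g : N ⟶ P.carrier) (k : F ⟶ P), unit ≫ k.hom = g → k = lift P g

set_option linter.unusedSectionVars false
attribute [reducible] fpow
set_option maxHeartbeats 1000000

section Aux

variable [Abelian C] (X : C ⥤ C) [PreservesFiniteLimits X] [PreservesFiniteColimits X]

instance xAdditive : X.Additive := Functor.additive_of_preserves_binary_products X

@[simp] lemma fpow_zero_obj (M : C) : (fpow X 0).obj M = M := rfl
@[simp] lemma fpow_succ_obj (n : ℕ) (M : C) :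
    (fpow X (n+1)).obj M = X.obj ((fpow X n).obj M) := rfl
@[simp] lemma fpow_succ_map (n : ℕ) {M N : C} (f : M ⟶ N) :
    (fpow X (n+1)).map f = X.map ((fpow X n).map f) := rfl
@[simp] lemma fpow_zero_map {M N : C} (f : M ⟶ N) : (fpow X 0).map f = f := rfl

lemma fpow_preservesFiniteLimits : ∀ n, PreservesFiniteLimits (fpow X n)
  | 0 => by dsimp [fpow]; infer_instance
  | (n+1) => by
      have := fpow_preservesFiniteLimits n
      dsimp [fpow]; exact Limits.comp_preservesFiniteLimits _ _

lemma fpow_preservesFiniteColimits : ∀ n, PreservesFiniteColimits (fpow X n)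
  | 0 => by dsimp [fpow]; infer_instance
  | (n+1) => by
      have := fpow_preservesFiniteColimits n
      dsimp [fpow]; exact Limits.comp_preservesFiniteColimits _ _

lemma isZero_map (Z : C) (h : IsZero Z) : IsZero (X.obj Z) := X.map_isZero h

lemma fpow_isZero_mono {M : C} {k : ℕ} (h : IsZero ((fpow X k).obj M)) :
    ∀ j, k ≤ j → IsZero ((fpow X j).obj M) := by
  intro j hj
  induction j with
  | zero => simpa [Nat.le_zero.mp hj] using h
  | succ j ih =>
      rcases Nat.lt_or_ge k (j+1) with h'|h'
      · have := ih (Nat.lt_succ_iff.mp h')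
        exact (fpow_succ_obj X j M) ▸ isZero_map X _ this
      · have : k = j + 1 := le_antisymm hj h'
        exact this ▸ h

lemma fpow_injective (hXinj : ∀ I : C, Injective I → Injective (X.obj I))
    {J : C} (hJ : Injective J) : ∀ n, Injective ((fpow X n).obj J)
  | 0 => hJ
  | (n+1) => hXinj _ (fpow_injective hXinj hJ n)

lemma fpow_mono {M N : C} (f : M ⟶ N) [Mono f] (n : ℕ) : Mono ((fpow X n).map f) := by
  have := fpow_preservesFiniteLimits X n
  exact (fpow X n).map_mono f

/-! ### The explicit model of the free module -/

variable (J : C)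

@[reducible] noncomputable def G : ℕ → C
  | 0 => J
  | (m+1) => J ⊞ X.obj (G m)

noncomputable def tauG : ∀ m, G X J (m+1) ⟶ G X J m
  | 0 => (biprod.desc (𝟙 J) 0 : J ⊞ X.obj (G X J 0) ⟶ G X J 0)
  | (m+1) => (biprod.map (𝟙 J) (X.map (tauG m)) : J ⊞ X.obj (G X J (m+1)) ⟶ J ⊞ X.obj (G X J m))

noncomputable def iotG : ∀ m, G X J m ⟶ G X J (m+1)
  | 0 => (biprod.inl : J ⟶ J ⊞ X.obj (G X J 0))
  | (m+1) => (biprod.map (𝟙 J) (X.map (iotG m)) : J ⊞ X.obj (G X J m) ⟶ J ⊞ X.obj (G X J (m+1)))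

noncomputable def strG : ∀ m, X.obj (G X J m) ⟶ G X J m
  | 0 => 0
  | (m+1) => X.map (tauG X J m) ≫ (biprod.inr : X.obj (G X J m) ⟶ J ⊞ X.obj (G X J m))

noncomputable def prG : ∀ m i, G X J m ⟶ (fpow X i).obj J
  | 0, 0 => 𝟙 J
  | 0, (_+1) => 0
  | (_+1), 0 => biprod.fst
  | (m+1), (i+1) => (biprod.snd : J ⊞ X.obj (G X J m) ⟶ _) ≫ X.map (prG m i)

noncomputable def sigG : ∀ m i, (fpow X i).obj J ⟶ G X J m
  | 0, 0 => 𝟙 J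
  | 0, (_+1) => 0
  | (_+1), 0 => biprod.inl
  | (m+1), (i+1) => X.map (sigG m i) ≫ (biprod.inr : X.obj (G X J m) ⟶ J ⊞ X.obj (G X J m))

@[simp] lemma G_zero : G X J 0 = J := rfl
@[simp] lemma G_succ (m : ℕ) : G X J (m+1) = (J ⊞ X.obj (G X J m) : C) := rfl

@[simp] lemma tauG_zero : tauG X J 0 = (biprod.desc (𝟙 J) 0 : J ⊞ X.obj (G X J 0) ⟶ G X J 0) := rfl
@[simp] lemma tauG_succ (m : ℕ) : tauG X J (m+1) =
    (biprod.map (𝟙 J) (X.map (tauG X J m)) : J ⊞ X.obj (G X J (m+1)) ⟶ J ⊞ X.obj (G X J m)) := rfl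
@[simp] lemma iotG_zero : iotG X J 0 = (biprod.inl : J ⟶ J ⊞ X.obj (G X J 0)) := rfl
@[simp] lemma iotG_succ (m : ℕ) : iotG X J (m+1) =
    (biprod.map (𝟙 J) (X.map (iotG X J m)) : J ⊞ X.obj (G X J m) ⟶ J ⊞ X.obj (G X J (m+1))) := rfl
@[simp] lemma strG_zero : strG X J 0 = 0 := rfl
@[simp] lemma strG_succ (m : ℕ) : strG X J (m+1) =
    X.map (tauG X J m) ≫ (biprod.inr : X.obj (G X J m) ⟶ J ⊞ X.obj (G X J m)) := rfl
@[simp] lemma prG_zero_zero : prG X J 0 0 = 𝟙 J := rfl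
@[simp] lemma prG_zero_succ (i : ℕ) : prG X J 0 (i+1) = 0 := rfl
@[simp] lemma prG_succ_zero (m : ℕ) :
    prG X J (m+1) 0 = (biprod.fst : J ⊞ X.obj (G X J m) ⟶ J) := rfl
@[simp] lemma prG_succ_succ (m i : ℕ) : prG X J (m+1) (i+1) =
    (biprod.snd : J ⊞ X.obj (G X J m) ⟶ _) ≫ X.map (prG X J m i) := rfl
@[simp] lemma sigG_zero_zero : sigG X J 0 0 = 𝟙 J := rfl
@[simp] lemma sigG_zero_succ (i : ℕ) : sigG X J 0 (i+1) = 0 := rfl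
@[simp] lemma sigG_succ_zero (m : ℕ) :
    sigG X J (m+1) 0 = (biprod.inl : J ⟶ J ⊞ X.obj (G X J m)) := rfl
@[simp] lemma sigG_succ_succ (m i : ℕ) : sigG X J (m+1) (i+1) =
    X.map (sigG X J m i) ≫ (biprod.inr : X.obj (G X J m) ⟶ J ⊞ X.obj (G X J m)) := rfl

lemma iot_tau : ∀ m, iotG X J m ≫ tauG X J m = 𝟙 (G X J m)
  | 0 => by simp
  | (m+1) => by
      apply biprod.hom_ext'
      · simp [G_succ]
      · simp only [iotG_succ, tauG_succ, biprod.inr_map_assoc, Category.id_comp, biprod.inr_map]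
        rw [← Functor.map_comp_assoc, iot_tau m, CategoryTheory.Functor.map_id]
        simp [G_succ]

lemma tau_iot : ∀ m, tauG X J m ≫ iotG X J m =
    𝟙 (G X J (m+1)) - prG X J (m+1) (m+1) ≫ sigG X J (m+1) (m+1)
  | 0 => by
      apply biprod.hom_ext'
      · simp [G_succ]
      · simp [Preadditive.comp_sub, G_succ]
  | (m+1) => by
      have ih := tau_iot m
      apply biprod.hom_ext'
      · simp [Preadditive.comp_sub, G_succ]
      · simp only [tauG_succ, iotG_succ, biprod.inr_map_assoc, biprod.inr_map]
        rw [← Functor.map_comp_assoc, ih]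
        simp [Preadditive.sub_comp, CategoryTheory.Functor.map_sub,
          CategoryTheory.Functor.map_comp, G_succ]

lemma sig_pr_self : ∀ m i, i ≤ m → sigG X J m i ≫ prG X J m i = 𝟙 _
  | 0, 0, _ => by simp
  | (m+1), 0, _ => by simp
  | (m+1), (i+1), h => by
      simp only [sigG_succ_succ, prG_succ_succ, Category.assoc, biprod.inr_snd_assoc,
        ← Functor.map_comp, sig_pr_self m i (Nat.succ_le_succ_iff.mp h),
        CategoryTheory.Functor.map_id, fpow_succ_obj]
      rfl

lemma sig_pr_ne : ∀ m i j, i ≠ j → sigG X J m i ≫ prG X J m j = 0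
  | 0, 0, 0, h => absurd rfl h
  | 0, 0, (j+1), _ => by simp
  | 0, (i+1), j, _ => by simp
  | (m+1), 0, 0, h => absurd rfl h
  | (m+1), 0, (j+1), _ => by simp
  | (m+1), (i+1), 0, _ => by simp
  | (m+1), (i+1), (j+1), h => by
      simp only [sigG_succ_succ, prG_succ_succ, Category.assoc, biprod.inr_snd_assoc,
        ← Functor.map_comp, sig_pr_ne m i j (fun e => h (by rw [e])),
        CategoryTheory.Functor.map_zero, comp_zero]

lemma totalG : ∀ m, (∑ i ∈ Finset.range (m+1), prG X J m i ≫ sigG X J m i) = 𝟙 (G X J m)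
  | 0 => by simp
  | (m+1) => by
      rw [Finset.sum_range_succ' _ (m+1)]
      have ih := totalG m
      apply biprod.hom_ext'
      · simp [Preadditive.comp_add, Preadditive.comp_sum, G_succ]
      · simp only [Preadditive.comp_add, Preadditive.comp_sum, prG_succ_succ, sigG_succ_succ,
          prG_succ_zero, sigG_succ_zero, biprod.inr_snd_assoc, Category.assoc, biprod.inr_fst_assoc,
          zero_comp, comp_zero, add_zero]
        simp only [← Category.assoc, ← Functor.map_comp]
        rw [← Preadditive.sum_comp, ← CategoryTheory.Functor.map_sum, ih,
          CategoryTheory.Functor.map_id]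
        simp [G_succ]

lemma sig_tau : ∀ m i, i ≤ m → sigG X J (m+1) i ≫ tauG X J m = sigG X J m i
  | 0, 0, _ => by simp
  | (m+1), 0, _ => by simp
  | 0, (i+1), h => by omega
  | (m+1), (i+1), h => by
      simp only [sigG_succ_succ, tauG_succ, Category.assoc, biprod.inr_map]
      rw [← Functor.map_comp_assoc, sig_tau m i (Nat.succ_le_succ_iff.mp h)]

lemma sig_str : ∀ m i, i + 1 ≤ m → X.map (sigG X J m i) ≫ strG X J m = sigG X J m (i+1)
  | (m+1), i, h => by
      simp only [strG_succ, sigG_succ_succ]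
      rw [← Functor.map_comp_assoc, sig_tau X J m i (Nat.succ_le_succ_iff.mp h)]

lemma tau_pr : ∀ m i, i ≤ m → tauG X J m ≫ prG X J m i = prG X J (m+1) i
  | 0, 0, _ => by apply biprod.hom_ext' <;> simp
  | (m+1), 0, _ => by simp
  | 0, (i+1), h => by omega
  | (m+1), (i+1), h => by
      simp only [tauG_succ, prG_succ_succ, biprod.map_snd_assoc]
      rw [← Functor.map_comp, tau_pr m i (Nat.succ_le_succ_iff.mp h)]

lemma str_pr_zero : ∀ m, strG X J m ≫ prG X J m 0 = 0
  | 0 => zero_comp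
  | (m+1) => by simp

lemma str_pr_succ : ∀ m i, i + 1 ≤ m → strG X J m ≫ prG X J m (i+1) = X.map (prG X J m i)
  | (m+1), i, h => by
      simp only [strG_succ, prG_succ_succ, Category.assoc, biprod.inr_snd_assoc]
      rw [← Functor.map_comp, tau_pr X J m i (Nat.succ_le_succ_iff.mp h)]

lemma strG_mono {n : ℕ} (hz : IsZero ((fpow X n).obj J)) : Mono (strG X J n) := by
  cases n with
  | zero =>
      apply Preadditive.mono_of_cancel_zero
      intro P g _
      exact (isZero_map X _ hz).eq_of_tgt g 0
  | succ m =>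
      apply Preadditive.mono_of_cancel_zero
      intro P g hg
      rw [strG_succ, ← Category.assoc] at hg
      have hg2 : g ≫ X.map (tauG X J m) = 0 := by
        have := (cancel_mono (biprod.inr : X.obj (G X J m) ⟶ J ⊞ X.obj (G X J m))).mp
          (hg.trans zero_comp.symm)
        exact this
      have h3 : g ≫ X.map (tauG X J m ≫ iotG X J m) = 0 := by
        rw [CategoryTheory.Functor.map_comp, ← Category.assoc, hg2, zero_comp]
      rw [tau_iot, CategoryTheory.Functor.map_sub, CategoryTheory.Functor.map_id,
        Preadditive.comp_sub, Category.comp_id, CategoryTheory.Functor.map_comp,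
        ← Category.assoc] at h3
      have hzX : IsZero (X.obj ((fpow X (m+1)).obj J)) := isZero_map X _ hz
      have : X.map (sigG X J (m+1) (m+1)) = 0 := hzX.eq_of_src _ 0
      rw [this, comp_zero, sub_zero] at h3
      exact h3

/-! ### modules -/

noncomputable def sAct (P : XMod X) : ∀ i, (fpow X i).obj P.carrier ⟶ P.carrier
  | 0 => 𝟙 _
  | (i+1) => X.map (sAct P i) ≫ P.str

@[simp] lemma sAct_zero (P : XMod X) : sAct X P 0 = 𝟙 _ := rfl
@[simp] lemma sAct_succ (P : XMod X) (i : ℕ) :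
    sAct X P (i+1) = X.map (sAct X P i) ≫ P.str := rfl

@[reducible] noncomputable def modelM (n : ℕ) : XMod X := ⟨G X J n, strG X J n⟩

@[simp] lemma modelM_carrier (n : ℕ) : (modelM X J n).carrier = G X J n := rfl
@[simp] lemma modelM_str (n : ℕ) : (modelM X J n).str = strG X J n := rfl

/-! ### maps into the model -/

variable {X J} in
/-- assemble a family into a map into the model -/
noncomputable def asmHom {Bc : C} (n : ℕ) (h : ∀ i : ℕ, Bc ⟶ (fpow X i).obj J) :
    Bc ⟶ G X J n :=
  ∑ i ∈ Finset.range (n+1), h i ≫ sigG X J n i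

variable {X J} in
lemma asm_pr {Bc : C} (n : ℕ) (h : ∀ i : ℕ, Bc ⟶ (fpow X i).obj J) {i : ℕ} (hi : i ≤ n) :
    asmHom n h ≫ prG X J n i = h i := by
  rw [asmHom, Preadditive.sum_comp]
  rw [Finset.sum_eq_single i]
  · rw [Category.assoc, sig_pr_self X J n i hi, Category.comp_id]
  · intro j _ hj
    rw [Category.assoc, sig_pr_ne X J n j i hj, comp_zero]
  · intro hmem
    exact absurd (Finset.mem_range.mpr (Nat.lt_succ_of_le hi)) hmem

variable {X J} in
lemma asm_recon {Bc : C} (n : ℕ) (φ : Bc ⟶ G X J n) :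
    asmHom n (fun i => φ ≫ prG X J n i) = φ := by
  rw [asmHom]
  simp only [Category.assoc]
  rw [← Preadditive.comp_sum, totalG, Category.comp_id]

variable {X J} in
lemma asm_comm {n : ℕ} (hz : IsZero ((fpow X n).obj J)) (B : XMod X)
    (h : ∀ i : ℕ, B.carrier ⟶ (fpow X i).obj J)
    (h0 : B.str ≫ h 0 = 0)
    (hS : ∀ i, B.str ≫ h (i+1) = X.map (h i)) :
    B.str ≫ asmHom n h = X.map (asmHom n h) ≫ strG X J n := by
  rw [asmHom, Preadditive.comp_sum, CategoryTheory.Functor.map_sum, Preadditive.sum_comp]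
  rw [Finset.sum_range_succ' (fun i => B.str ≫ h i ≫ sigG X J n i) n,
    Finset.sum_range_succ (fun i => X.map (h i ≫ sigG X J n i) ≫ strG X J n) n]
  have htop : X.map (h n ≫ sigG X J n n) ≫ strG X J n = 0 := by
    rw [CategoryTheory.Functor.map_comp, Category.assoc]
    have : X.map (sigG X J n n) = 0 := (isZero_map X _ hz).eq_of_src _ 0
    rw [this, zero_comp, comp_zero]
  rw [htop, add_zero]
  have hbot : B.str ≫ h 0 ≫ sigG X J n 0 = 0 := by
    rw [← Category.assoc, h0, zero_comp]
  rw [hbot, add_zero]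
  apply Finset.sum_congr rfl
  intro i hi
  rw [← Category.assoc, hS i, CategoryTheory.Functor.map_comp, Category.assoc,
    sig_str X J n i (Nat.succ_le_of_lt (Finset.mem_range.mp hi))]

variable {X J} in
/-- the module morphism into the model assembled from a compatible family -/
noncomputable def asmMod {n : ℕ} (hz : IsZero ((fpow X n).obj J)) (B : XMod X)
    (h : ∀ i : ℕ, B.carrier ⟶ (fpow X i).obj J)
    (h0 : B.str ≫ h 0 = 0)
    (hS : ∀ i, B.str ≫ h (i+1) = X.map (h i)) : B ⟶ modelM X J n :=
  XModHom.mk (asmHom n h) (asm_comm hz B h h0 hS)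

variable {X J} in
@[simp] lemma asmMod_hom {n : ℕ} (hz : IsZero ((fpow X n).obj J)) (B : XMod X)
    (h : ∀ i : ℕ, B.carrier ⟶ (fpow X i).obj J)
    (h0 : B.str ≫ h 0 = 0)
    (hS : ∀ i, B.str ≫ h (i+1) = X.map (h i)) :
    (asmMod hz B h h0 hS).hom = asmHom n h := rfl

/-! ### the free module structure on the model -/

variable {X J} in
lemma slot_det {n : ℕ} (P : XMod X) (k : modelM X J n ⟶ P) :
    ∀ i, i ≤ n → sigG X J n i ≫ k.hom =
      (fpow X i).map (sigG X J n 0 ≫ k.hom) ≫ sAct X P i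
  | 0, _ => by simp
  | (i+1), hi => by
      rw [← sig_str X J n i hi, Category.assoc]
    
      have hcomm := k.comm
      rw [modelM_str] at hcomm
      rw [hcomm, ← Category.assoc, ← CategoryTheory.Functor.map_comp,
        slot_det P k i (Nat.le_of_succ_le hi), sAct_succ,
        CategoryTheory.Functor.map_comp, fpow_succ_map, Category.assoc]

noncomputable def freeModel {n : ℕ} (hz : IsZero ((fpow X n).obj J)) :
    IsFreeXModOn X (modelM X J n) J where
  unit := sigG X J n 0
  lift P g := XModHom.mk
    (∑ i ∈ Finset.range (n+1), prG X J n i ≫ (fpow X i).map g ≫ sAct X P i)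
    (by
      rw [modelM_str, Preadditive.comp_sum, CategoryTheory.Functor.map_sum,
        Preadditive.sum_comp]
      rw [Finset.sum_range_succ' (fun i => strG X J n ≫ prG X J n i ≫ (fpow X i).map g
        ≫ sAct X P i) n,
        Finset.sum_range_succ (fun i => X.map (prG X J n i ≫ (fpow X i).map g ≫ sAct X P i)
        ≫ P.str) n]
      have htop : X.map (prG X J n n ≫ (fpow X n).map g ≫ sAct X P n) ≫ P.str = 0 := by
        have : X.map (prG X J n n) = 0 := (isZero_map X _ hz).eq_of_tgt _ 0
        rw [CategoryTheory.Functor.map_comp, this, zero_comp, zero_comp]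
      have hbot : strG X J n ≫ prG X J n 0 ≫ (fpow X 0).map g ≫ sAct X P 0 = 0 := by
        rw [← Category.assoc, str_pr_zero, zero_comp]
      rw [htop, add_zero, hbot, add_zero]
      apply Finset.sum_congr rfl
      intro i hi
      rw [← Category.assoc, str_pr_succ X J n i (Nat.succ_le_of_lt (Finset.mem_range.mp hi))]
      rw [CategoryTheory.Functor.map_comp, CategoryTheory.Functor.map_comp]
      simp only [fpow_succ_map, sAct_succ, Category.assoc]
      rfl)
  fac P g := by
    simp only [Preadditive.comp_sum]
    rw [Finset.sum_eq_single 0]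
    · rw [← Category.assoc, sig_pr_self X J n 0 (Nat.zero_le n)]
      show 𝟙 J ≫ g ≫ 𝟙 P.carrier = g
      simp
    · intro j _ hj
      rw [← Category.assoc, sig_pr_ne X J n 0 j (fun e => hj e.symm), zero_comp]
    · simp
  uniq P g k hk := by
    apply XModHom.ext
    show k.hom = _
    have step1 : k.hom = 𝟙 (G X J n) ≫ k.hom := (Category.id_comp _).symm
    rw [step1, ← totalG X J n, Preadditive.sum_comp]
    apply Finset.sum_congr rfl
    intro i hi
    rw [Category.assoc, slot_det P k i (Nat.lt_succ_iff.mp (Finset.mem_range.mp hi))]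
    rw [show sigG X J n 0 ≫ k.hom = g from hk]

end Aux

variable [Abelian C] {X : C ⥤ C}

/-- A conflation in `Mono(X)`: a kernel-cokernel pair (detected on underlying objects). -/
def IsConf {A B D : XMod X} (f : A ⟶ B) (g : B ⟶ D) : Prop :=
  Mono f.hom ∧ Epi g.hom ∧
    ∃ w : f.hom ≫ g.hom = 0, (ShortComplex.mk f.hom g.hom w).Exact

/-- An inflation in the exact category `Mono(X)`: a monomorphism whose cokernel again lies
in `Mono(X)`. -/
def IsInflationMono {A B : XMod X} (f : A ⟶ B) : Prop :=
  ∃ (D : XMod X) (g : B ⟶ D), Mono D.str ∧ IsConf f g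

/-- Injectivity in the exact category `Mono(X)`. -/
def IsInjMonoX (I : XMod X) : Prop :=
  Mono I.str ∧ ∀ (A B : XMod X) (f : A ⟶ B), Mono A.str → Mono B.str →
    IsInflationMono f → ∀ g : A ⟶ I, ∃ h : B ⟶ I, f ≫ h = g

section Aux2

variable [PreservesFiniteLimits X] [PreservesFiniteColimits X]

/-- The key extension step: extend a pair of compatible maps along an inflation. -/
lemma extStep {A B D : XMod X} (f : A ⟶ B) (p : B ⟶ D) (hD : Mono D.str)
    (hc : IsConf f p) {Q : C} (hQ : Injective Q)
    (q1 : A.carrier ⟶ Q) (q2 : X.obj B.carrier ⟶ Q)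
    (hcompat : A.str ≫ q1 = X.map f.hom ≫ q2) :
    ∃ h : B.carrier ⟶ Q, f.hom ≫ h = q1 ∧ B.str ≫ h = q2 := by
  obtain ⟨hmono, hepi, w, hexact⟩ := hc
  haveI : Mono f.hom := hmono
  haveI : Epi p.hom := hepi
  haveI : Injective Q := hQ
  set S : ShortComplex C := ShortComplex.mk f.hom p.hom w with hSdef
  have hSX : (S.map X).Exact := hexact.map X
  haveI : Epi (S.map X).g := by
    show Epi (X.map p.hom)
    exact X.map_epi p.hom
  set h' : B.carrier ⟶ Q := Injective.factorThru q1 f.hom with hh'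
  have hfh' : f.hom ≫ h' = q1 := Injective.comp_factorThru q1 f.hom
  set e : X.obj B.carrier ⟶ Q := B.str ≫ h' - q2 with he
  have heX : X.map f.hom ≫ e = 0 := by
    rw [he, Preadditive.comp_sub, ← Category.assoc, ← f.comm, Category.assoc, hfh',
      hcompat, sub_self]
  have heX' : (S.map X).f ≫ e = 0 := heX
  set ebar : X.obj D.carrier ⟶ Q := hSX.desc e heX' with hebar
  have hdesc : X.map p.hom ≫ ebar = e := hSX.g_desc e heX'
  haveI : Mono D.str := hD
  set cbar : D.carrier ⟶ Q := Injective.factorThru ebar D.str with hcbar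
  have hcfac : D.str ≫ cbar = ebar := Injective.comp_factorThru ebar D.str
  refine ⟨h' - p.hom ≫ cbar, ?_, ?_⟩
  · rw [Preadditive.comp_sub, hfh', ← Category.assoc, w, zero_comp, sub_zero]
  · rw [Preadditive.comp_sub, ← Category.assoc, p.comm, Category.assoc, hcfac, hdesc, he]
    abel

/-- A module whose structure map is epi is zero, under local nilpotency. -/
lemma str_epi_zero (hX : LocallyNilpotent X) (D : XMod X) (h : Epi D.str) :
    IsZero D.carrier := by
  have hepi : ∀ k, Epi (sAct X D k) := by
    intro k
    induction k with
    | zero => rw [sAct_zero]; infer_instance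
    | succ k ih =>
        rw [sAct_succ]
        haveI := ih
        haveI : Epi (X.map (sAct X D k)) := X.map_epi _
        exact epi_comp _ _
  obtain ⟨k, hk⟩ := hX D.carrier
  have hzero : sAct X D k = 0 := hk.eq_of_src _ 0
  rw [IsZero.iff_id_eq_zero]
  haveI := hepi k
  rw [← cancel_epi (sAct X D k), hzero, zero_comp, comp_zero]

/-- retract of injective is injective -/
lemma injective_of_retract {Q Z : C} (hZ : Injective Z) (s : Q ⟶ Z) (ρ : Z ⟶ Q)
    (hsρ : s ≫ ρ = 𝟙 Q) : Injective Q := by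
  constructor
  intro A B c ι hι
  haveI := hZ
  refine ⟨Injective.factorThru (c ≫ s) ι ≫ ρ, ?_⟩
  rw [← Category.assoc, Injective.comp_factorThru, Category.assoc, hsρ, Category.comp_id]

/-- two free modules on the same object are isomorphic, via a module iso respecting units -/
lemma free_transport {F F' : XMod X} {J : C} (hF : IsFreeXModOn X F J)
    (hF' : IsFreeXModOn X F' J) :
    ∃ (φ : F ⟶ F') (ψ : F' ⟶ F), φ ≫ ψ = 𝟙 F ∧ ψ ≫ φ = 𝟙 F' ∧
      hF.unit ≫ φ.hom = hF'.unit := by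
  set φ := hF.lift F' hF'.unit with hφ
  set ψ := hF'.lift F hF.unit with hψ
  have h1 : φ ≫ ψ = 𝟙 F := by
    have e1 := hF.uniq F hF.unit (φ ≫ ψ) (by
      rw [XMod.comp_hom, ← Category.assoc, hφ, hF.fac, hψ, hF'.fac])
    have e2 := hF.uniq F hF.unit (𝟙 F) (by rw [XMod.id_hom, Category.comp_id])
    rw [e1, e2]
  have h2 : ψ ≫ φ = 𝟙 F' := by
    have e1 := hF'.uniq F' hF'.unit (ψ ≫ φ) (by
      rw [XMod.comp_hom, ← Category.assoc, hψ, hF'.fac, hφ, hF.fac])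
    have e2 := hF'.uniq F' hF'.unit (𝟙 F') (by rw [XMod.id_hom, Category.comp_id])
    rw [e1, e2]
  exact ⟨φ, ψ, h1, h2, hF.fac _ _⟩

/-- transport of injectivity along a module isomorphism -/
lemma isInjMonoX_of_iso {F F' : XMod X} (φ : F ⟶ F') (ψ : F' ⟶ F)
    (h1 : φ ≫ ψ = 𝟙 F) (h2 : ψ ≫ φ = 𝟙 F') (hF' : IsInjMonoX F') : IsInjMonoX F := by
  have hh1 : φ.hom ≫ ψ.hom = 𝟙 F.carrier := by
    rw [← XMod.comp_hom, h1, XMod.id_hom]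
  have hh2 : ψ.hom ≫ φ.hom = 𝟙 F'.carrier := by
    rw [← XMod.comp_hom, h2, XMod.id_hom]
  haveI : IsIso φ.hom := ⟨ψ.hom, hh1, hh2⟩
  constructor
  · -- Mono F.str
    have hcomm := φ.comm
    have : Mono (X.map φ.hom ≫ F'.str) := by
      haveI : IsIso (X.map φ.hom) := inferInstance
      haveI := hF'.1
      apply mono_comp
    rw [← hcomm] at this
    exact mono_of_mono F.str φ.hom
  · intro A B f hA hB hinf g
    obtain ⟨h, hh⟩ := hF'.2 A B f hA hB hinf (g ≫ φ)
    refine ⟨h ≫ ψ, ?_⟩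
    rw [← Category.assoc, hh, Category.assoc, h1, Category.comp_id]

end Aux2

section Aux3

variable [PreservesFiniteLimits X] [PreservesFiniteColimits X]

lemma pr_gt (J : C) : ∀ m i, m < i → prG X J m i = 0
  | 0, _+1, _ => rfl
  | (m+1), (i+1), h => by
      rw [prG_succ_succ, pr_gt J m i (Nat.succ_lt_succ_iff.mp h), CategoryTheory.Functor.map_zero,
        comp_zero]

lemma pr_top {J : C} {n : ℕ} (hz : IsZero ((fpow X n).obj J)) :
    ∀ i, n ≤ i → prG X J n i = 0 := by
  intro i hi
  rcases Nat.lt_or_ge n i with h|h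
  · exact pr_gt J n i h
  · have : i = n := le_antisymm h hi
    subst this
    exact hz.eq_of_tgt _ 0

lemma modelInj {J : C} (hJ : Injective J)
    (hXinj : ∀ I : C, Injective I → Injective (X.obj I))
    {n : ℕ} (hz : IsZero ((fpow X n).obj J)) : IsInjMonoX (modelM X J n) := by
  constructor
  · exact strG_mono X J hz
  intro A B f hA hB hinf g
  obtain ⟨D, p, hD, hc⟩ := hinf
  set gc : ∀ i : ℕ, A.carrier ⟶ (fpow X i).obj J := fun i => g.hom ≫ prG X J n i with hgc
  have hgcomm : A.str ≫ g.hom = X.map g.hom ≫ strG X J n := g.comm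
  have rel0 : A.str ≫ gc 0 = 0 := by
    rw [hgc, ← Category.assoc, hgcomm, Category.assoc, str_pr_zero, comp_zero]
  have relS : ∀ i, A.str ≫ gc (i+1) = X.map (gc i) := by
    intro i
    rcases Nat.lt_or_ge i n with h|h
    · rw [hgc, ← Category.assoc, hgcomm, Category.assoc, str_pr_succ X J n i h,
        ← CategoryTheory.Functor.map_comp]
    · have h1 : prG X J n (i+1) = 0 := pr_top hz (i+1) (Nat.le_succ_of_le h)
      have h2 : prG X J n i = 0 := pr_top hz i h
      rw [hgc]
      simp only [h1, h2, comp_zero, CategoryTheory.Functor.map_zero]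
  -- build the chain of extensions
  have chain : ∀ m : ℕ, ∃ h : ∀ i : ℕ, B.carrier ⟶ (fpow X i).obj J,
      (∀ i, i ≤ m → f.hom ≫ h i = gc i) ∧ (B.str ≫ h 0 = 0) ∧
      (∀ i, i + 1 ≤ m → B.str ≫ h (i+1) = X.map (h i)) ∧ (∀ i, m < i → h i = 0) := by
    intro m
    induction m with
    | zero =>
        obtain ⟨x0, hx1, hx2⟩ := extStep f p hD hc hJ (gc 0) 0
          (by rw [rel0, comp_zero])
        refine ⟨Function.update (fun i => (0 : B.carrier ⟶ (fpow X i).obj J)) 0 x0,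
          ?_, ?_, ?_, ?_⟩
        · intro i hi
          have : i = 0 := Nat.le_zero.mp hi
          subst this
          rw [Function.update_self]
          exact hx1
        · rw [Function.update_self]; exact hx2
        · intro i hi; omega
        · intro i hi
          rw [Function.update_of_ne (by omega)]
    | succ m ih =>
        obtain ⟨h, hf1, h0, hS, htop⟩ := ih
        obtain ⟨x, hx1, hx2⟩ := extStep f p hD hc
          (fpow_injective X hXinj hJ (m+1)) (gc (m+1)) (X.map (h m))
          (by rw [relS m, ← hf1 m le_rfl, CategoryTheory.Functor.map_comp])
        refine ⟨Function.update h (m+1) x, ?_, ?_, ?_, ?_⟩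
        · intro i hi
          rcases Nat.lt_or_ge i (m+1) with h'|h'
          · rw [Function.update_of_ne (by omega)]
            exact hf1 i (Nat.lt_succ_iff.mp h')
          · have : i = m + 1 := le_antisymm hi h'
            subst this
            rw [Function.update_self]
            exact hx1
        · rw [Function.update_of_ne (by omega)]; exact h0
        · intro i hi
          rcases Nat.lt_or_ge (i+1) (m+1) with h'|h'
          · rw [Function.update_of_ne (by omega), Function.update_of_ne (by omega)]
            exact hS i (Nat.lt_succ_iff.mp h')
          · have : i + 1 = m + 1 := le_antisymm hi h'
            have hi' : i = m := by omega
            subst hi'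
            rw [Function.update_self, Function.update_of_ne (by omega)]
            exact hx2
        · intro i hi
          rw [Function.update_of_ne (by omega)]
          exact htop i (by omega)
  obtain ⟨h, hf1, h0, hS, htop⟩ := chain n
  have hSall : ∀ i, B.str ≫ h (i+1) = X.map (h i) := by
    intro i
    rcases Nat.lt_or_ge i n with h'|h'
    · exact hS i h'
    · have h1 : h (i+1) = 0 := htop (i+1) (by omega)
      have h2 : h i = 0 := by
        rcases Nat.lt_or_ge n i with h''|h''
        · exact htop i h''
        · have : i = n := le_antisymm h'' h'
          subst this
          exact hz.eq_of_tgt _ 0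
      rw [h1, h2, comp_zero, CategoryTheory.Functor.map_zero]
  refine ⟨asmMod hz B h h0 hSall, ?_⟩
  apply XModHom.ext
  show f.hom ≫ asmHom n h = g.hom
  calc f.hom ≫ asmHom n h
      = asmHom n (fun i => g.hom ≫ prG X J n i) := by
        rw [asmHom, asmHom, Preadditive.comp_sum]
        apply Finset.sum_congr rfl
        intro i hi
        rw [← Category.assoc, hf1 i (Nat.lt_succ_iff.mp (Finset.mem_range.mp hi))]
    _ = g.hom := asm_recon n g.hom

end Aux3

section Aux4

variable [PreservesFiniteLimits X] [PreservesFiniteColimits X]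

noncomputable def lamb (Mc : C) : ∀ i, (fpow X i).obj (X.obj Mc) ⟶ (fpow X (i+1)).obj Mc
  | 0 => 𝟙 _
  | (i+1) => X.map (lamb Mc i)

@[simp] lemma lamb_zero (Mc : C) : lamb (X := X) Mc 0 = 𝟙 _ := rfl
@[simp] lemma lamb_succ (Mc : C) (i : ℕ) :
    lamb (X := X) Mc (i+1) = X.map (lamb (X := X) Mc i) := rfl

lemma lamb_sAct (P : XMod X) : ∀ i,
    lamb (X := X) P.carrier i ≫ sAct X P (i+1) = (fpow X i).map P.str ≫ sAct X P i
  | 0 => by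
      rw [lamb_zero, Category.id_comp, sAct_succ, sAct_zero, CategoryTheory.Functor.map_id,
        Category.id_comp]
      show P.str = P.str ≫ 𝟙 _
      rw [Category.comp_id]
  | (i+1) => by
      rw [lamb_succ, sAct_succ, ← Category.assoc, ← CategoryTheory.Functor.map_comp,
        lamb_sAct P i, CategoryTheory.Functor.map_comp, fpow_succ_map, Category.assoc,
        ← sAct_succ]

/-- The main embedding: a module with monic structure map admits an inflation into a model. -/
lemma embed_inflation (hXinj : ∀ I : C, Injective I → Injective (X.obj I))
    (M : XMod X) (hM : Mono M.str) {Q : C} (hQ : Injective Q)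
    (e : cokernel M.str ⟶ Q) (hemono : Mono e) {n : ℕ}
    (hzQ : IsZero ((fpow X n).obj Q)) (hzM : IsZero ((fpow X n).obj M.carrier)) :
    ∃ f : M ⟶ modelM X Q n, IsInflationMono f ∧
      f.hom ≫ prG X Q n 0 = cokernel.π M.str ≫ e := by
  haveI := hM
  haveI := hemono
  -- the compatible family of maps into powers of Q
  set φ : ∀ i : ℕ, M.carrier ⟶ (fpow X i).obj Q := fun i => Nat.rec
    (cokernel.π M.str ≫ e)
    (fun i prev =>
      letI : Injective ((fpow X (i+1)).obj Q) := fpow_injective X hXinj hQ (i+1)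
      Injective.factorThru (X.map prev) M.str) i with hφ
  have φ0 : φ 0 = cokernel.π M.str ≫ e := rfl
  have φS : ∀ i, M.str ≫ φ (i+1) = X.map (φ i) := by
    intro i
    letI : Injective ((fpow X (i+1)).obj Q) := fpow_injective X hXinj hQ (i+1)
    exact Injective.comp_factorThru _ _
  have rel0 : M.str ≫ φ 0 = 0 := by
    rw [φ0, ← Category.assoc, cokernel.condition, zero_comp]
  set fM : M ⟶ modelM X Q n := asmMod hzQ M φ rel0 φS with hfM
  have w0 : M.str ≫ cokernel.π M.str = 0 := cokernel.condition _
  set S0 : ShortComplex C := ShortComplex.mk M.str (cokernel.π M.str) w0 with hS0def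
  have hS0x : S0.Exact := S0.exact_of_g_is_cokernel (cokernelIsCokernel M.str)
  haveI : Mono S0.f := hM
  have sact_phi : ∀ i, sAct X M i ≫ φ i = (fpow X i).map (φ 0) := by
    intro i
    induction i with
    | zero =>
        rw [sAct_zero, Category.id_comp]
        rfl
    | succ i ih =>
        rw [sAct_succ, Category.assoc, φS i, ← CategoryTheory.Functor.map_comp, ih,
          fpow_succ_map]
  -- monomorphy of the assembled map
  set a : M.carrier ⟶ G X Q n := asmHom n φ with ha
  have hkfac : ∀ i, i ≤ n → ∃ t : kernel a ⟶ (fpow X i).obj M.carrier,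
      t ≫ sAct X M i = kernel.ι a := by
    intro i
    induction i with
    | zero => exact fun _ => ⟨kernel.ι a, by rw [sAct_zero, Category.comp_id]⟩
    | succ i ih =>
        intro hi
        obtain ⟨t, ht⟩ := ih (Nat.le_of_succ_le hi)
        have hkphi : kernel.ι a ≫ φ i = 0 := by
          rw [← asm_pr n φ (Nat.le_of_succ_le hi), ← ha, ← Category.assoc,
            kernel.condition, zero_comp]
        have htphi : t ≫ (fpow X i).map (φ 0) = 0 := by
          rw [← sact_phi i, ← Category.assoc, ht, hkphi]
        haveI := fpow_preservesFiniteLimits X i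
        haveI := fpow_preservesFiniteColimits X i
        haveI : Mono ((fpow X i).map e) := fpow_mono X e i
        have htpi : t ≫ (fpow X i).map (cokernel.π M.str) = 0 := by
          rw [φ0, CategoryTheory.Functor.map_comp, ← Category.assoc] at htphi
          exact (cancel_mono ((fpow X i).map e)).mp (by rw [htphi, zero_comp])
        have hSx : (S0.map (fpow X i)).Exact := hS0x.map (fpow X i)
        haveI : Mono (S0.map (fpow X i)).f := by
          show Mono ((fpow X i).map M.str)
          exact fpow_mono X M.str i
        have htpi' : t ≫ (S0.map (fpow X i)).g = 0 := htpi
        set u := hSx.lift t htpi' with hu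
        have huf : u ≫ (fpow X i).map M.str = t := hSx.lift_f t htpi'
        refine ⟨u ≫ lamb (X := X) M.carrier i, ?_⟩
        erw [Category.assoc, lamb_sAct, ← Category.assoc, huf, ht]
  have hamono : Mono a := by
    obtain ⟨t, ht⟩ := hkfac n le_rfl
    have ht0 : t = 0 := hzM.eq_of_tgt t 0
    have hι : kernel.ι a = 0 := by rw [← ht, ht0, zero_comp]
    apply Preadditive.mono_of_cancel_zero
    intro P g hg
    rw [← kernel.lift_ι a g hg, hι, comp_zero]
  -- the cokernel module
  have acomm : M.str ≫ a = X.map a ≫ strG X Q n := asm_comm hzQ M φ rel0 φS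
  have hdesccond : X.map a ≫ strG X Q n ≫ cokernel.π a = 0 := by
    rw [← Category.assoc, ← acomm, Category.assoc, cokernel.condition, comp_zero]
  set Dstr : X.obj (cokernel a) ⟶ cokernel a :=
    (PreservesCokernel.iso X a).hom ≫ cokernel.desc (X.map a)
      (strG X Q n ≫ cokernel.π a) hdesccond with hDstr
  have hπiso : X.map (cokernel.π a) ≫ (PreservesCokernel.iso X a).hom = cokernel.π (X.map a) := by
    rw [← π_comp_cokernelComparison a X, ← PreservesCokernel.iso_inv, Category.assoc,
      Iso.inv_hom_id, Category.comp_id]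
  have hcommπ : strG X Q n ≫ cokernel.π a = X.map (cokernel.π a) ≫ Dstr := by
    rw [hDstr, ← Category.assoc, hπiso, cokernel.π_desc]
  set D : XMod X := ⟨cokernel a, Dstr⟩ with hD
  -- exactness of (a, π)
  have w1 : a ≫ cokernel.π a = 0 := cokernel.condition a
  set S1 : ShortComplex C := ShortComplex.mk a (cokernel.π a) w1 with hS1def
  have hS1x : S1.Exact := S1.exact_of_g_is_cokernel (cokernelIsCokernel a)
  -- the pullback square
  haveI hstrGmono : Mono (strG X Q n) := strG_mono X Q hzQ
  have hsnd : ∀ s : PullbackCone (strG X Q n) a, s.snd ≫ S0.g = 0 := by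
    intro s
    show s.snd ≫ cokernel.π M.str = 0
    have h1 : s.snd ≫ φ 0 = 0 := by
      rw [← asm_pr n φ (Nat.zero_le n), ← ha, ← Category.assoc, ← s.condition,
        Category.assoc, str_pr_zero, comp_zero]
    rw [φ0, ← Category.assoc] at h1
    exact (cancel_mono e).mp (by rw [h1, zero_comp])
  have hpb : IsPullback (X.map a) M.str (strG X Q n) a := by
    refine IsPullback.of_isLimit (PullbackCone.IsLimit.mk acomm.symm
      (fun s => hS0x.lift s.snd (hsnd s)) (fun s => ?_) (fun s => ?_) (fun s m hm1 hm2 => ?_))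
    · -- fac left
      rw [← cancel_mono (strG X Q n), Category.assoc, ← acomm]
      have hlf : hS0x.lift s.snd (hsnd s) ≫ S0.f = s.snd := hS0x.lift_f _ _
      rw [← Category.assoc]
      show (hS0x.lift s.snd (hsnd s) ≫ M.str) ≫ a = s.fst ≫ strG X Q n
      rw [hlf, s.condition]
    · exact hS0x.lift_f _ _
    · rw [← cancel_mono M.str]
      have hlf : hS0x.lift s.snd (hsnd s) ≫ S0.f = s.snd := hS0x.lift_f _ _
      show m ≫ M.str = _
      rw [hm2]
      exact hlf.symm
  -- D has monic structure map, by a pseudoelement chase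
  have hDmono : Mono Dstr := by
    open CategoryTheory.Abelian in
    open Pseudoelement in
    apply Pseudoelement.mono_of_zero_of_map_zero
    intro d hd
    haveI : Epi (X.map (cokernel.π a)) := X.map_epi _
    obtain ⟨y, hy⟩ := Pseudoelement.pseudo_surjective_of_epi (X.map (cokernel.π a)) d
    have h1 : (cokernel.π a) ((strG X Q n) y) = 0 := by
      rw [← Pseudoelement.comp_apply, hcommπ, Pseudoelement.comp_apply, hy, hd]
    have h1' : S1.g ((strG X Q n) y) = 0 := h1
    obtain ⟨m, hm⟩ := Pseudoelement.pseudo_exact_of_exact hS1x _ h1'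
    obtain ⟨sel, hs1, hs2⟩ := Pseudoelement.pseudo_pullback
      (f := strG X Q n) (g := a) (p := y) (q := m) (by rw [hm])
    have hfst : hpb.isoPullback.inv ≫ X.map a = pullback.fst (strG X Q n) a := by
      rw [Iso.inv_comp_eq, hpb.isoPullback_hom_fst]
    have hz1 : (X.map a) ((hpb.isoPullback.inv) sel) = y := by
      rw [← Pseudoelement.comp_apply, hfst, hs1]
    have : d = (X.map (cokernel.π a)) ((X.map a) ((hpb.isoPullback.inv) sel)) := by
      rw [hz1, hy]
    rw [this, ← Pseudoelement.comp_apply, ← CategoryTheory.Functor.map_comp,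
      cokernel.condition, CategoryTheory.Functor.map_zero, Pseudoelement.zero_apply]
  -- assemble the conflation
  refine ⟨fM, ⟨D, XModHom.mk (cokernel.π a) hcommπ, hDmono, ?_, ?_, ?_⟩, ?_⟩
  · exact hamono
  · show Epi (cokernel.π a)
    infer_instance
  · exact ⟨w1, hS1x⟩
  · show a ≫ prG X Q n 0 = cokernel.π M.str ≫ e
    rw [ha, asm_pr n φ (Nat.zero_le n), φ0]

end Aux4

section Aux5

variable [PreservesFiniteLimits X] [PreservesFiniteColimits X]

noncomputable def thetaHom (J : C) (n : ℕ) : cokernel (strG X J n) ⟶ J :=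
  cokernel.desc _ (prG X J n 0) (str_pr_zero X J n)

noncomputable def thetaInv (J : C) (n : ℕ) : J ⟶ cokernel (strG X J n) :=
  sigG X J n 0 ≫ cokernel.π _

lemma theta_inv_hom (J : C) (n : ℕ) : thetaInv (X := X) J n ≫ thetaHom (X := X) J n = 𝟙 J := by
  rw [thetaInv, thetaHom, Category.assoc, cokernel.π_desc, sig_pr_self X J n 0 (Nat.zero_le n)]
  rfl

lemma theta_hom_inv (J : C) (n : ℕ) :
    thetaHom (X := X) J n ≫ thetaInv (X := X) J n = 𝟙 (cokernel (strG X J n)) := by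
  rw [← cancel_epi (cokernel.π (strG X J n)), ← Category.assoc, thetaHom, cokernel.π_desc,
    thetaInv, Category.comp_id]
  conv_rhs => rw [← Category.id_comp (cokernel.π (strG X J n)), ← totalG X J n]
  rw [Preadditive.sum_comp, Finset.sum_range_succ'
    (fun i => (prG X J n i ≫ sigG X J n i) ≫ cokernel.π (strG X J n)) n]
  have hz : ∀ i ∈ Finset.range n,
      (prG X J n (i+1) ≫ sigG X J n (i+1)) ≫ cokernel.π (strG X J n) = 0 := by
    intro i hi
    rw [Category.assoc, ← sig_str X J n i (Nat.succ_le_of_lt (Finset.mem_range.mp hi)),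
      Category.assoc, cokernel.condition, comp_zero, comp_zero]
  rw [Finset.sum_eq_zero hz, zero_add, Category.assoc]

noncomputable def cokerStrMap {M N : XMod X} (u : M ⟶ N) : cokernel M.str ⟶ cokernel N.str :=
  cokernel.map _ _ (X.map u.hom) u.hom u.comm

lemma π_cokerStrMap {M N : XMod X} (u : M ⟶ N) :
    cokernel.π M.str ≫ cokerStrMap u = u.hom ≫ cokernel.π N.str := by
  rw [cokerStrMap, cokernel.π_desc]

lemma cokerStrMap_comp {M N P : XMod X} (u : M ⟶ N) (v : N ⟶ P) :
    cokerStrMap (u ≫ v) = cokerStrMap u ≫ cokerStrMap v := by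
  rw [← cancel_epi (cokernel.π M.str), π_cokerStrMap, ← Category.assoc, π_cokerStrMap,
    Category.assoc, π_cokerStrMap, XMod.comp_hom, Category.assoc]

lemma cokerStrMap_id (M : XMod X) : cokerStrMap (𝟙 M) = 𝟙 (cokernel M.str) := by
  rw [← cancel_epi (cokernel.π M.str), π_cokerStrMap, XMod.id_hom, Category.id_comp,
    Category.comp_id]

lemma part_one (hXn : LocallyNilpotent X)
    [EnoughInjectives C]
    (hXinj : ∀ I : C, Injective I → Injective (X.obj I))
    (M : XMod X) (hMinj : IsInjMonoX M) :
    ∃ J : C, Injective J ∧ Nonempty (IsFreeXModOn X M J) := by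
  have hM : Mono M.str := hMinj.1
  set Qc := cokernel M.str with hQc
  -- Step 1 : embed into a model over an injective
  set J1 := Injective.under Qc with hJ1def
  have hJ1 : Injective J1 := Injective.injective_under Qc
  obtain ⟨n1a, hz1a⟩ := hXn J1
  obtain ⟨nM, hzM0⟩ := hXn M.carrier
  set n1 := max n1a nM with hn1
  have hzJ1 : IsZero ((fpow X n1).obj J1) := fpow_isZero_mono X hz1a n1 (le_max_left _ _)
  have hzM1 : IsZero ((fpow X n1).obj M.carrier) := fpow_isZero_mono X hzM0 n1 (le_max_right _ _)
  obtain ⟨f1, hinf1, hf1pr⟩ := embed_inflation hXinj M hM hJ1 (Injective.ι Qc)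
    inferInstance hzJ1 hzM1
  -- Step 2 : a retraction from injectivity of M
  have hmstr : Mono (modelM X J1 n1).str := strG_mono X J1 hzJ1
  obtain ⟨r1, hr1⟩ := hMinj.2 M (modelM X J1 n1) f1 hM hmstr hinf1 (𝟙 M)
  -- Step 3 : the top Qc is injective
  have hQinj : Injective Qc := by
    apply injective_of_retract hJ1 (cokerStrMap f1 ≫ thetaHom (X := X) J1 n1)
      (thetaInv (X := X) J1 n1 ≫ cokerStrMap r1)
    rw [Category.assoc, ← Category.assoc (thetaHom (X := X) J1 n1), theta_hom_inv,
      Category.id_comp, ← cokerStrMap_comp, hr1, cokerStrMap_id]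
  -- Step 4 : embed into the model over Qc itself
  obtain ⟨n2a, hz2a⟩ := hXn Qc
  set n2 := max n2a nM with hn2
  have hzQ2 : IsZero ((fpow X n2).obj Qc) := fpow_isZero_mono X hz2a n2 (le_max_left _ _)
  have hzM2 : IsZero ((fpow X n2).obj M.carrier) := fpow_isZero_mono X hzM0 n2 (le_max_right _ _)
  obtain ⟨f2, hinf2, hf2pr⟩ := embed_inflation hXinj M hM hQinj (𝟙 Qc) inferInstance hzQ2 hzM2
  rw [Category.comp_id] at hf2pr
  obtain ⟨D, p, hDm, hpmono, hpepi, w2, hexact2⟩ := hinf2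
  haveI : Epi p.hom := hpepi
  have pcomm : strG X Qc n2 ≫ p.hom = X.map p.hom ≫ D.str := p.comm
  -- Step 5 : the cokernel of D.str vanishes
  have hslot : ∀ i, i + 1 ≤ n2 →
      sigG X Qc n2 (i+1) ≫ p.hom ≫ cokernel.π D.str = 0 := by
    intro i hi
    rw [← sig_str X Qc n2 i hi, Category.assoc, ← Category.assoc (strG X Qc n2), pcomm]
    simp only [Category.assoc, cokernel.condition, comp_zero]
  have hslot0 : sigG X Qc n2 0 ≫ p.hom ≫ cokernel.π D.str = 0 := by
    rw [← cancel_epi (cokernel.π M.str), comp_zero, ← hf2pr]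
    have htot := totalG X Qc n2
    rw [Finset.sum_range_succ' (fun i => prG X Qc n2 i ≫ sigG X Qc n2 i) n2] at htot
    have hp0s : prG X Qc n2 0 ≫ sigG X Qc n2 0 =
        𝟙 (G X Qc n2) - ∑ i ∈ Finset.range n2, prG X Qc n2 (i+1) ≫ sigG X Qc n2 (i+1) := by
      rw [← htot]; abel
    rw [Category.assoc, ← Category.assoc (prG X Qc n2 0), hp0s]
    rw [Preadditive.sub_comp, Category.id_comp, Preadditive.sum_comp]
    have hzsum : (∑ i ∈ Finset.range n2, (prG X Qc n2 (i+1) ≫ sigG X Qc n2 (i+1))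
        ≫ (p.hom ≫ cokernel.π D.str)) = 0 := by
      apply Finset.sum_eq_zero
      intro i hi
      rw [Category.assoc, hslot i (Nat.succ_le_of_lt (Finset.mem_range.mp hi)), comp_zero]
    rw [hzsum, sub_zero, ← Category.assoc, w2, zero_comp]
  have hppi : p.hom ≫ cokernel.π D.str = 0 := by
    rw [← Category.id_comp (p.hom ≫ cokernel.π D.str),
      show 𝟙 (modelM X Qc n2).carrier = 𝟙 (G X Qc n2) from rfl, ← totalG X Qc n2,
      Preadditive.sum_comp]
    apply Finset.sum_eq_zero
    intro i hi
    rcases i with _ | j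
    · rw [Category.assoc, hslot0, comp_zero]
    · rcases Nat.lt_or_ge j n2 with h'|h'
      · rw [Category.assoc, hslot j h', comp_zero]
      · have : prG X Qc n2 (j+1) = 0 := pr_top hzQ2 (j+1) (Nat.le_succ_of_le h')
        rw [this, zero_comp, zero_comp]
  have hπD : cokernel.π D.str = 0 := (cancel_epi p.hom).mp (by rw [hppi, comp_zero])
  have hDepi : Epi D.str := CategoryTheory.Abelian.epi_of_cokernel_π_eq_zero _ hπD
  have hDzero : IsZero D.carrier := str_epi_zero hXn D hDepi
  have hp0 : p.hom = 0 := hDzero.eq_of_tgt _ 0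
  have hf2epi : Epi f2.hom := hexact2.epi_f hp0
  haveI : Mono f2.hom := hpmono
  haveI : Epi f2.hom := hf2epi
  haveI : IsIso f2.hom := isIso_of_mono_of_epi _
  -- Step 6 : transport the free structure
  set hFm := freeModel X Qc hzQ2 with hFmdef
  have finvcomm : (modelM X Qc n2).str ≫ inv f2.hom = X.map (inv f2.hom) ≫ M.str := by
    rw [← cancel_mono f2.hom, Category.assoc, Category.assoc, IsIso.inv_hom_id,
      Category.comp_id, f2.comm, ← Category.assoc, ← CategoryTheory.Functor.map_comp,
      IsIso.inv_hom_id, CategoryTheory.Functor.map_id, Category.id_comp]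
  set finv : modelM X Qc n2 ⟶ M := XModHom.mk (inv f2.hom) finvcomm with hfinv
  have hff : f2 ≫ finv = 𝟙 M := by
    apply XModHom.ext
    rw [XMod.comp_hom, XMod.id_hom]
    exact IsIso.hom_inv_id _
  refine ⟨Qc, hQinj, ⟨{
    unit := hFm.unit ≫ inv f2.hom
    lift := fun P g => f2 ≫ hFm.lift P g
    fac := fun P g => by
      rw [XMod.comp_hom, Category.assoc, ← Category.assoc (inv f2.hom), IsIso.inv_hom_id,
        Category.id_comp, hFm.fac]
    uniq := fun P g k hk => by
      have h1 : finv ≫ k = hFm.lift P g := by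
        apply hFm.uniq
        rw [XMod.comp_hom, hfinv, ← Category.assoc]
        exact hk
      calc k = (f2 ≫ finv) ≫ k := by rw [hff, Category.id_comp]
        _ = f2 ≫ hFm.lift P g := by rw [Category.assoc, h1]
  }⟩⟩

end Aux5

/-- Let `C` be abelian with enough injectives and `X` exact, locally
nilpotent and preserving injectives. The injective objects of the exact category
`Mono(X)` are exactly the free modules `f₁(J)` on injective objects `J` of `C`, and
`Mono(X)` has enough injectives. -/
theorem injectives_of_monoX
    [EnoughInjectives C]
    [PreservesFiniteLimits X] [PreservesFiniteColimits X]
    (hX : LocallyNilpotent X)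
    (hXinj : ∀ I : C, Injective I → Injective (X.obj I)) :
    (∀ M : XMod X, IsInjMonoX M → ∃ J : C, Injective J ∧ Nonempty (IsFreeXModOn X M J)) ∧
    (∀ (J : C), Injective J → ∀ F : XMod X, IsFreeXModOn X F J → IsInjMonoX F) ∧
    (∀ M : XMod X, Mono M.str → ∃ (J : C) (F : XMod X) (f : M ⟶ F),
      Injective J ∧ Nonempty (IsFreeXModOn X F J) ∧ IsInflationMono f) := by
  refine ⟨?_, ?_, ?_⟩
  · intro M hMinj
    exact part_one hX hXinj M hMinj
  · intro J hJ F hF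
    obtain ⟨n, hzn⟩ := hX J
    obtain ⟨φ, ψ, h1, h2, _⟩ := free_transport hF (freeModel X J hzn)
    exact isInjMonoX_of_iso φ ψ h1 h2 (modelInj hJ hXinj hzn)
  · intro M hM
    obtain ⟨na, hza⟩ := hX (Injective.under (cokernel M.str))
    obtain ⟨nb, hzb⟩ := hX M.carrier
    have hzJ : IsZero ((fpow X (max na nb)).obj (Injective.under (cokernel M.str))) :=
      fpow_isZero_mono X hza _ (le_max_left _ _)
    have hzM : IsZero ((fpow X (max na nb)).obj M.carrier) :=
      fpow_isZero_mono X hzb _ (le_max_right _ _)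
    obtain ⟨f, hinf, _⟩ := embed_inflation hXinj M hM (Injective.injective_under _)
      (Injective.ι (cokernel M.str)) inferInstance hzJ hzM
    exact ⟨Injective.under (cokernel M.str), modelM X (Injective.under (cokernel M.str))
      (max na nb), f, Injective.injective_under _, ⟨freeModel X _ hzJ⟩, hinf⟩
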